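/- Let G be a connected simple graph on n ≥ 3 vertices with Randić index R, algebraic connectivity a, and diameter D. Then R·a ≥ 8√(n-1)/(nD²). -/

import Mathlib

open Finset Real Matrix

/-- The Randić index of a finite simple graph:
`R(G) = ∑_{uv ∈ E(G)} 1/√(d(u)·d(v))`. -/
noncomputable def randicIndex {V : Type*} [Fintype V] (G : SimpleGraph V) : ℝ :=
  letI : DecidableRel G.Adj := Classical.decRel _
  ∑ e ∈ G.edgeFinset,
    Sym2.lift ⟨fun u v => 1 / Real.sqrt ((G.degree u : ℝ) * (G.degree v : ℝ)),
      fun u v => by simp [mul_comm]⟩ e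

/-- The algebraic connectivity of a graph on `Fin n`: the second smallest eigenvalue
of the Laplacian matrix, characterized (via Courant–Fischer, since the all-ones vector
is an eigenvector of the smallest eigenvalue `0`) as the infimum of the Rayleigh
quotient over nonzero vectors orthogonal to the all-ones vector. -/
noncomputable def algebraicConnectivity {n : ℕ} (G : SimpleGraph (Fin n)) : ℝ :=
  letI : DecidableRel G.Adj := Classical.decRel _
  sInf {r : ℝ | ∃ x : Fin n → ℝ, x ≠ 0 ∧ (∑ i, x i) = 0 ∧
    r = (x ⬝ᵥ ((G.lapMatrix ℝ).mulVec x)) / (x ⬝ᵥ x)}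

/-- The edge connectivity of a graph: the least number of edges whose deletion
disconnects the graph. -/
noncomputable def edgeConnectivity {V : Type*} [Fintype V] (G : SimpleGraph V) : ℕ :=
  sInf {k : ℕ | ∃ s : Set (Sym2 V), s ⊆ G.edgeSet ∧ s.ncard = k ∧
    ¬ (G.deleteEdges s).Connected}

/-- The star `K_{1,n-1}` on vertex set `Fin n`: vertex `0` is adjacent to all others. -/
def starGraph (n : ℕ) : SimpleGraph (Fin n) where
  Adj i j := i ≠ j ∧ ((i : ℕ) = 0 ∨ (j : ℕ) = 0)
  symm := ⟨fun i j h => ⟨h.1.symm, h.2.symm⟩⟩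
  loopless := ⟨fun i h => h.1 rfl⟩

set_option linter.unusedSectionVars false
set_option maxHeartbeats 1000000

section Helpers

variable {V : Type*} [Fintype V] [DecidableEq V]

/-- Cauchy–Schwarz for lists. -/
lemma list_sq_sum_le (l : List ℝ) :
    l.sum ^ 2 ≤ (l.length : ℝ) * (l.map (fun a => a ^ 2)).sum := by
  induction l with
  | nil => simp
  | cons a l ih =>
    rcases l with _ | ⟨b, l'⟩
    · simp
    · set t := (b :: l')
      have ht0 : 0 ≤ (t.map (fun a => a ^ 2)).sum := by
        apply List.sum_nonneg
        intro x hx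
        obtain ⟨y, _, rfl⟩ := List.mem_map.mp hx
        positivity
      have hk1 : (1 : ℝ) ≤ t.length := by
        have : 1 ≤ t.length := by simp [t]
        exact_mod_cast this
      simp only [List.sum_cons, List.map_cons, List.length_cons]
      push_cast
      set k : ℝ := (t.length : ℝ)
      set s : ℝ := t.sum
      set T : ℝ := (t.map (fun a => a ^ 2)).sum
      have ihs : s ^ 2 ≤ k * T := ih
      have hkey : k * ((k + 1) * (a ^ 2 + T) - (a + s) ^ 2) ≥ 0 := by
        nlinarith [sq_nonneg (k * a - s), ihs,
          mul_le_mul_of_nonneg_left ihs (le_trans zero_le_one hk1)]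
      nlinarith [hkey, hk1]

/-- Telescoping sum along a walk. -/
lemma walk_telescope {G : SimpleGraph V} (x : V → ℝ) {u v : V} (w : G.Walk u v) :
    (w.darts.map (fun d => x d.toProd.1 - x d.toProd.2)).sum = x u - x v := by
  induction w with
  | nil => simp
  | cons h p ih => simp [ih]

variable (G : SimpleGraph V) [DecidableRel G.Adj] [Fintype G.edgeSet]

/-- Edge sums versus double vertex sums. -/
lemma edge_double (F : V → V → ℝ) (hF : ∀ u v, F u v = F v u) :
    (2:ℝ) * ∑ e ∈ G.edgeFinset, Sym2.lift ⟨F, hF⟩ e =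
      ∑ i, ∑ j, if G.Adj i j then F i j else 0 := by
  have hmap : ∀ d ∈ (univ : Finset G.Dart), d.edge ∈ G.edgeFinset := fun d _ => by
    simp [SimpleGraph.mem_edgeFinset, d.edge_mem]
  have h1 : ∑ d : G.Dart, F d.toProd.1 d.toProd.2
      = 2 * ∑ e ∈ G.edgeFinset, Sym2.lift ⟨F, hF⟩ e := by
    rw [← Finset.sum_fiberwise_of_maps_to hmap (fun d => F d.toProd.1 d.toProd.2)]
    rw [Finset.mul_sum]
    apply Finset.sum_congr rfl
    intro e he
    have : ∀ d ∈ (univ : Finset G.Dart).filter (fun d => d.edge = e),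
        F d.toProd.1 d.toProd.2 = Sym2.lift ⟨F, hF⟩ e := by
      intro d hd
      rw [Finset.mem_filter] at hd
      rw [← hd.2]
      have : d.edge = s(d.toProd.1, d.toProd.2) := rfl
      rw [this, Sym2.lift_mk]
    rw [Finset.sum_congr rfl this, Finset.sum_const, nsmul_eq_mul]
    congr 1
    have : #({d : G.Dart | d.edge = e} : Finset _) = 2 :=
      G.dart_edge_fiber_card e (SimpleGraph.mem_edgeFinset.mp he)
    exact_mod_cast this
  have h2 : ∑ d : G.Dart, F d.toProd.1 d.toProd.2
      = ∑ i, ∑ j, if G.Adj i j then F i j else 0 := by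
    have : ∑ i, ∑ j, (if G.Adj i j then F i j else 0)
        = ∑ p ∈ (univ : Finset (V × V)).filter (fun p => G.Adj p.1 p.2), F p.1 p.2 := by
      rw [Finset.sum_filter, ← Fintype.sum_prod_type']
    rw [this]
    refine Finset.sum_bij' (fun (d : G.Dart) _ => d.toProd)
      (fun p hp => SimpleGraph.Dart.mk p (Finset.mem_filter.mp hp).2)
      (fun d _ => ?_) (fun p hp => Finset.mem_univ _)
      (fun d _ => rfl) (fun p hp => rfl) (fun d _ => rfl)
    simp only [Finset.mem_filter, Finset.mem_univ, true_and]
    exact d.adj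
  rw [← h1, h2]

/-- The Laplacian quadratic form as a sum over edges. -/
lemma lap_form (x : V → ℝ) :
    x ⬝ᵥ ((G.lapMatrix ℝ).mulVec x) =
      ∑ e ∈ G.edgeFinset, Sym2.lift ⟨fun i j => (x i - x j)^2,
        fun i j => by ring_nf⟩ e := by
  have h := SimpleGraph.lapMatrix_toLinearMap₂' (R := ℝ) G x
  rw [Matrix.toLinearMap₂'_apply'] at h
  rw [h, ← edge_double G (fun i j => (x i - x j)^2) (fun i j => by ring_nf)]
  ring

end Helpers

/-- The key elementary inequality behind the Bollobás–Erdős bound. -/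
lemma key_ineq {N a b : ℝ} (hN : 1 ≤ N) (ha : 1 ≤ a) (haN : a ≤ N) (hb : 1 ≤ b) (hbN : b ≤ N) :
    Real.sqrt N / (N + 1) * (1/a + 1/b) ≤ 1 / Real.sqrt (a * b) := by
  have ha0 : (0:ℝ) < a := by linarith
  have hb0 : (0:ℝ) < b := by linarith
  have hab : (0:ℝ) < a * b := by positivity
  have e1 : (0:ℝ) ≤ N * a - b := by nlinarith
  have e2 : (0:ℝ) ≤ b * N - a := by nlinarith
  have e3 := mul_nonneg e1 e2
  have hsq : N * (a + b)^2 ≤ (N + 1)^2 * (a * b) := by nlinarith [e3]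
  have hkey : Real.sqrt N * (a + b) ≤ (N + 1) * Real.sqrt (a * b) := by
    have h1 : Real.sqrt (N * (a + b)^2) ≤ Real.sqrt ((N + 1)^2 * (a * b)) :=
      Real.sqrt_le_sqrt hsq
    rwa [Real.sqrt_mul (by linarith) , Real.sqrt_sq (by linarith),
      Real.sqrt_mul (by positivity), Real.sqrt_sq (by linarith)] at h1
  have hs : (0:ℝ) < Real.sqrt (a * b) := Real.sqrt_pos.mpr hab
  have hs2 : Real.sqrt (a * b) ^ 2 = a * b := Real.sq_sqrt hab.le
  have h2 : (1:ℝ)/a + 1/b = (a + b) / (a*b) := by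
    field_simp
    ring
  rw [h2, div_mul_div_comm, div_le_div_iff₀ (by positivity) hs]
  nlinarith [mul_le_mul_of_nonneg_right hkey hs.le]

lemma deg_pos {V : Type*} [Fintype V] [Nontrivial V] {G : SimpleGraph V} [DecidableRel G.Adj]
    (hG : G.Connected) (v : V) : 0 < G.degree v := by
  obtain ⟨w, hw⟩ := exists_ne v
  have hd : G.dist v w ≠ 0 :=
    SimpleGraph.dist_ne_zero_iff_ne_and_reachable.mpr ⟨(Ne.symm hw), hG v w⟩
  obtain ⟨p, hp⟩ := SimpleGraph.exists_walk_of_dist_ne_zero hd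
  cases p with
  | nil => exact absurd rfl hw
  | cons h q => exact (G.degree_pos_iff_exists_adj v).mpr ⟨_, h⟩

/-- The Bollobás–Erdős lower bound for the Randić index of a connected graph. -/
lemma randic_ge {n : ℕ} (hn : 3 ≤ n) (G : SimpleGraph (Fin n)) (hG : G.Connected) :
    Real.sqrt ((n:ℝ) - 1) ≤ randicIndex G := by
  classical
  haveI : Nontrivial (Fin n) := ⟨⟨⟨0, by omega⟩, ⟨1, by omega⟩, by simp [Fin.ext_iff]⟩⟩
  unfold randicIndex
  have hnR : (3:ℝ) ≤ (n:ℝ) := by exact_mod_cast hn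
  have hdpos : ∀ v, (1:ℝ) ≤ (G.degree v : ℝ) := by
    intro v; exact_mod_cast deg_pos hG v
  have hdlt : ∀ v, (G.degree v : ℝ) ≤ (n:ℝ) - 1 := by
    intro v
    have h1 := G.degree_lt_card_verts v
    rw [Fintype.card_fin] at h1
    have h2 : G.degree v ≤ n - 1 := by omega
    have h3 : (G.degree v : ℝ) ≤ ((n - 1 : ℕ) : ℝ) := by exact_mod_cast h2
    have h4 : ((n - 1 : ℕ) : ℝ) = (n:ℝ) - 1 := by
      have : 1 ≤ n := by omega
      push_cast [this]
      ring
    linarith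
  set N : ℝ := (n:ℝ) - 1 with hN
  have hN1 : (1:ℝ) ≤ N := by simp [hN]; linarith
  have step1 : ∑ e ∈ G.edgeFinset,
      Sym2.lift ⟨fun u v => Real.sqrt N / (N+1) * ((1:ℝ)/(G.degree u) + 1/(G.degree v)),
        fun u v => by ring_nf⟩ e
      ≤ ∑ e ∈ G.edgeFinset,
      Sym2.lift ⟨fun u v => 1 / Real.sqrt ((G.degree u : ℝ) * (G.degree v : ℝ)),
        fun u v => by simp [mul_comm]⟩ e := by
    apply Finset.sum_le_sum
    intro e he
    induction e with
    | _ u v =>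
      simp only [Sym2.lift_mk]
      exact key_ineq hN1 (hdpos u) (hdlt u) (hdpos v) (hdlt v)
  have step2 : ∑ e ∈ G.edgeFinset,
      Sym2.lift ⟨fun u v => Real.sqrt N / (N+1) * ((1:ℝ)/(G.degree u) + 1/(G.degree v)),
        fun u v => by ring_nf⟩ e = Real.sqrt N := by
    have hdouble := edge_double G
      (fun u v => Real.sqrt N / (N+1) * ((1:ℝ)/(G.degree u) + 1/(G.degree v)))
      (fun u v => by ring_nf)
    have hfilter : ∀ j : Fin n, #(univ.filter (fun i => G.Adj i j)) = G.degree j := by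
      intro j
      rw [← SimpleGraph.card_neighborFinset_eq_degree, SimpleGraph.neighborFinset_eq_filter]
      congr 1
      ext i
      simp [SimpleGraph.adj_comm]
    have hfilter' : ∀ i : Fin n, #(univ.filter (fun j => G.Adj i j)) = G.degree i := by
      intro i
      rw [← SimpleGraph.card_neighborFinset_eq_degree, SimpleGraph.neighborFinset_eq_filter]
    have hrhs : ∑ i, ∑ j, (if G.Adj i j then
        Real.sqrt N / (N+1) * ((1:ℝ)/(G.degree i) + 1/(G.degree j)) else 0)
        = Real.sqrt N / (N+1) * (2 * n) := by
      have expand : ∀ i j : Fin n, (if G.Adj i j then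
          Real.sqrt N / (N+1) * ((1:ℝ)/(G.degree i) + 1/(G.degree j)) else 0)
          = Real.sqrt N / (N+1) * ((if G.Adj i j then (1:ℝ)/(G.degree i) else 0)
            + (if G.Adj i j then (1:ℝ)/(G.degree j) else 0)) := by
        intro i j
        by_cases h : G.Adj i j <;> simp [h]
      simp_rw [expand, ← Finset.mul_sum]
      congr 1
      rw [show (2 * (n:ℝ)) = (n:ℝ) + (n:ℝ) by ring]
      have sumA : ∑ i : Fin n, ∑ j : Fin n, (if G.Adj i j then (1:ℝ)/(G.degree i) else 0)
          = (n:ℝ) := by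
        have : ∀ i : Fin n, ∑ j : Fin n, (if G.Adj i j then (1:ℝ)/(G.degree i) else 0)
            = (1:ℝ) := by
          intro i
          rw [← Finset.sum_filter, Finset.sum_const, hfilter' i, nsmul_eq_mul]
          have h1 : (0:ℝ) < (G.degree i : ℝ) := by have := hdpos i; linarith
          field_simp
        rw [Finset.sum_congr rfl (fun i _ => this i)]
        simp
      have sumB : ∑ i : Fin n, ∑ j : Fin n, (if G.Adj i j then (1:ℝ)/(G.degree j) else 0)
          = (n:ℝ) := by
        rw [Finset.sum_comm]
        have : ∀ j : Fin n, ∑ i : Fin n, (if G.Adj i j then (1:ℝ)/(G.degree j) else 0)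
            = (1:ℝ) := by
          intro j
          rw [← Finset.sum_filter, Finset.sum_const, hfilter j, nsmul_eq_mul]
          have h1 : (0:ℝ) < (G.degree j : ℝ) := by have := hdpos j; linarith
          field_simp
        rw [Finset.sum_congr rfl (fun j _ => this j)]
        simp
      simp_rw [Finset.sum_add_distrib]
      rw [sumA, sumB]
    have : (2:ℝ) * ∑ e ∈ G.edgeFinset,
        Sym2.lift ⟨fun u v => Real.sqrt N / (N+1) * ((1:ℝ)/(G.degree u) + 1/(G.degree v)),
          fun u v => by ring_nf⟩ e = Real.sqrt N / (N+1) * (2 * n) := by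
      rw [hdouble]; exact hrhs
    have hNn : N + 1 = (n:ℝ) := by simp [hN]
    have hn0 : (n:ℝ) ≠ 0 := by positivity
    have h5 : Real.sqrt N / (N + 1) * (2 * (n:ℝ)) = 2 * Real.sqrt N := by
      rw [hNn]
      field_simp
    rw [h5] at this
    linarith
  linarith [step1, step2.symm.le]

lemma dot_self_pos {n : ℕ} (x : Fin n → ℝ) (hx : x ≠ 0) : 0 < x ⬝ᵥ x := by
  obtain ⟨i, hi⟩ := Function.ne_iff.mp hx
  rw [dotProduct]
  exact Finset.sum_pos' (fun j _ => mul_self_nonneg _)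
    ⟨i, Finset.mem_univ i, mul_self_pos.mpr hi⟩

/-- Mohar's bound: the Rayleigh quotient of a sum-zero vector is at least `4/(n·D)`. -/
lemma lap_quadform_ge {n : ℕ} (hn : 3 ≤ n) (G : SimpleGraph (Fin n)) [DecidableRel G.Adj]
    [Fintype G.edgeSet] (hG : G.Connected) (hed : G.ediam ≠ ⊤)
    (x : Fin n → ℝ) (hx : x ≠ 0) (hsum : ∑ i, x i = 0) :
    4 / ((n:ℝ) * (G.diam : ℝ)) * (x ⬝ᵥ x) ≤ x ⬝ᵥ ((G.lapMatrix ℝ).mulVec x) := by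
  classical
  haveI : Nontrivial (Fin n) := ⟨⟨⟨0, by omega⟩, ⟨1, by omega⟩, by simp [Fin.ext_iff]⟩⟩
  have hnR : (3:ℝ) ≤ (n:ℝ) := by exact_mod_cast hn
  have hD0 : G.diam ≠ 0 := by
    intro h
    rcases SimpleGraph.diam_eq_zero.mp h with h' | h'
    · exact hed h'
    · exact (not_subsingleton _) h'
  have hD1 : (1:ℝ) ≤ (G.diam : ℝ) := by
    have : 1 ≤ G.diam := Nat.one_le_iff_ne_zero.mpr hD0
    exact_mod_cast this
  obtain ⟨p, -, hp⟩ := Finset.exists_max_image (univ : Finset (Fin n)) x univ_nonempty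
  obtain ⟨q, -, hq⟩ := Finset.exists_min_image (univ : Finset (Fin n)) x univ_nonempty
  set M := x p with hM
  set μ := x q with hμ
  have hle : ∀ i, μ ≤ x i ∧ x i ≤ M :=
    fun i => ⟨hq i (Finset.mem_univ i), hp i (Finset.mem_univ i)⟩
  have hlt : μ < M := by
    by_contra h
    push_neg at h
    have hall : ∀ i, x i = M := fun i => le_antisymm (hle i).2 (le_trans h (hle i).1)
    have : ∑ i, x i = (n:ℝ) * M := by
      rw [Finset.sum_congr rfl (fun i _ => hall i)]
      simp [Finset.card_univ, mul_comm]
    have hM0 : M = 0 := by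
      rw [hsum] at this
      have : (n:ℝ) ≠ 0 := by positivity
      field_simp at *
      exact (mul_eq_zero.mp this.symm).resolve_right ‹(n:ℝ) ≠ 0›
    exact hx (funext fun i => by rw [hall i, hM0]; rfl)
  have hxx : x ⬝ᵥ x ≤ (n:ℝ) * (M - μ)^2 / 4 := by
    have h1 : ∀ i ∈ (univ : Finset (Fin n)), x i * x i ≤ (M + μ) * x i - M * μ := by
      intro i _
      nlinarith [(hle i).1, (hle i).2]
    have h2 : x ⬝ᵥ x ≤ ∑ i, ((M + μ) * x i - M * μ) := by
      rw [dotProduct]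
      exact Finset.sum_le_sum h1
    have h3 : ∑ i, ((M + μ) * x i - M * μ) = - ((n:ℝ) * (M * μ)) := by
      rw [Finset.sum_sub_distrib, ← Finset.mul_sum, hsum]
      simp [Finset.card_univ]
    rw [h3] at h2
    nlinarith [sq_nonneg (M + μ)]
  have hpq : p ≠ q := fun h => by rw [hM, h, ← hμ] at hlt; exact lt_irrefl _ hlt
  obtain ⟨w, hwp, hwl⟩ := hG.exists_path_of_dist p q
  have hlen : w.length ≤ G.diam := by
    rw [hwl]; exact SimpleGraph.dist_le_diam hed
  set l : List ℝ := w.darts.map (fun d => x d.toProd.1 - x d.toProd.2) with hl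
  have htel : l.sum = M - μ := walk_telescope x w
  set T : ℝ := (l.map (fun a => a ^ 2)).sum with hT
  have hT0 : 0 ≤ T := by
    apply List.sum_nonneg
    intro a ha
    obtain ⟨y, -, rfl⟩ := List.mem_map.mp ha
    positivity
  have hCS : (M - μ)^2 ≤ (G.diam : ℝ) * T := by
    have := list_sq_sum_le l
    rw [htel] at this
    have hll : (l.length : ℝ) ≤ (G.diam : ℝ) := by
      have : l.length = w.length := by
        rw [hl, List.length_map, SimpleGraph.Walk.length_darts]
      rw [this]
      exact_mod_cast hlen
    nlinarith [hT0]
  have hTe : T = ∑ e ∈ w.edges.toFinset,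
      Sym2.lift ⟨fun i j => (x i - x j)^2, fun i j => by ring_nf⟩ e := by
    rw [List.sum_toFinset _ (hwp.isTrail.edges_nodup)]
    rw [hT, hl, List.map_map, SimpleGraph.Walk.edges, List.map_map]
    congr 1
  have hsub : w.edges.toFinset ⊆ G.edgeFinset := by
    intro e he
    rw [List.mem_toFinset] at he
    rw [SimpleGraph.mem_edgeFinset]
    exact w.edges_subset_edgeSet he
  have hTQ : T ≤ x ⬝ᵥ ((G.lapMatrix ℝ).mulVec x) := by
    rw [lap_form, hTe]
    apply Finset.sum_le_sum_of_subset_of_nonneg hsub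
    intro e _ _
    induction e with
    | _ u v => simp only [Sym2.lift_mk]; positivity
  have hnD : (0:ℝ) < (n:ℝ) * (G.diam : ℝ) := by positivity
  rw [div_mul_eq_mul_div, div_le_iff₀ hnD]
  have hQ0 : (M - μ)^2 ≤ (G.diam : ℝ) * (x ⬝ᵥ ((G.lapMatrix ℝ).mulVec x)) := by
    calc (M - μ)^2 ≤ (G.diam : ℝ) * T := hCS
      _ ≤ _ := by nlinarith [hTQ, hD1]
  nlinarith [hxx, hQ0, hnR, hD1]

/-- For a complete graph the Rayleigh quotient of a sum-zero vector is at least `n`. -/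
lemma lap_quadform_complete {n : ℕ} (G : SimpleGraph (Fin n)) [DecidableRel G.Adj]
    (hc : ∀ i j : Fin n, i ≠ j → G.Adj i j) (x : Fin n → ℝ) (hsum : ∑ i, x i = 0) :
    (n:ℝ) * (x ⬝ᵥ x) ≤ x ⬝ᵥ ((G.lapMatrix ℝ).mulVec x) := by
  have h := SimpleGraph.lapMatrix_toLinearMap₂' (R := ℝ) G x
  rw [Matrix.toLinearMap₂'_apply'] at h
  rw [h]
  have hite : ∀ i j : Fin n, (if G.Adj i j then (x i - x j)^2 else 0) = (x i - x j)^2 := by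
    intro i j
    by_cases hij : i = j
    · subst hij; simp [G.loopless.irrefl i]
    · rw [if_pos (hc i j hij)]
  simp_rw [hite]
  have hrow : ∀ i : Fin n, ∑ j, (x i - x j)^2 = (n:ℝ) * x i^2 + ∑ j, x j^2 := by
    intro i
    have : ∀ j : Fin n, (x i - x j)^2 = x i^2 - 2*x i*x j + x j^2 := fun j => by ring
    simp_rw [this, Finset.sum_add_distrib, Finset.sum_sub_distrib, Finset.sum_const,
      Finset.card_univ, Fintype.card_fin, ← Finset.mul_sum]
    rw [hsum]
    simp only [nsmul_eq_mul, mul_zero, sub_zero]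
  simp_rw [hrow]
  rw [Finset.sum_add_distrib, ← Finset.mul_sum, Finset.sum_const, Finset.card_univ,
    Fintype.card_fin, nsmul_eq_mul]
  have hxx : x ⬝ᵥ x = ∑ j, x j^2 := by
    rw [dotProduct]
    congr 1
    ext j
    ring
  rw [hxx]
  ring_nf
  nlinarith [Finset.sum_nonneg (fun j (_ : j ∈ (univ : Finset (Fin n))) => sq_nonneg (x j))]

theorem randic_mul_algConn_ge_of_diam
    {n : ℕ} (hn : 3 ≤ n) (G : SimpleGraph (Fin n)) (hG : G.Connected) :
    randicIndex G * algebraicConnectivity G ≥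
      8 * Real.sqrt ((n : ℝ) - 1) / ((n : ℝ) * (G.diam : ℝ) ^ 2) := by
  classical
  haveI : Nontrivial (Fin n) := ⟨⟨⟨0, by omega⟩, ⟨1, by omega⟩, by simp [Fin.ext_iff]⟩⟩
  have hnR : (3:ℝ) ≤ (n:ℝ) := by exact_mod_cast hn
  have hnpos : (0:ℝ) < (n:ℝ) := by linarith
  have hed : G.ediam ≠ ⊤ := by
    obtain ⟨u, v, huv⟩ := SimpleGraph.exists_edist_eq_ediam_of_finite (G := G)
    rw [← huv]
    exact SimpleGraph.edist_ne_top_iff_reachable.mpr (hG u v)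
  have hD0 : G.diam ≠ 0 := by
    intro h
    rcases SimpleGraph.diam_eq_zero.mp h with h' | h'
    · exact hed h'
    · exact (not_subsingleton _) h'
  have hD1 : (1:ℝ) ≤ (G.diam : ℝ) := by
    have : 1 ≤ G.diam := Nat.one_le_iff_ne_zero.mpr hD0
    exact_mod_cast this
  have hR := randic_ge hn G hG
  have hR0 : (0:ℝ) ≤ randicIndex G := le_trans (Real.sqrt_nonneg _) hR
  -- the witness showing the Rayleigh set is nonempty
  have hSne : ∃ r : ℝ, ∃ x : Fin n → ℝ, x ≠ 0 ∧ (∑ i, x i) = 0 ∧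
      r = (x ⬝ᵥ ((G.lapMatrix ℝ).mulVec x)) / (x ⬝ᵥ x) := by
    set a : Fin n := ⟨0, by omega⟩ with ha
    set b : Fin n := ⟨1, by omega⟩ with hb
    have hab : a ≠ b := by simp [ha, hb, Fin.ext_iff]
    refine ⟨_, fun i => (if i = a then (1:ℝ) else 0) - (if i = b then 1 else 0), ?_, ?_, rfl⟩
    · intro h
      have := congrFun h a
      simp [hab] at this
    · simp [Finset.sum_sub_distrib, Finset.sum_ite_eq']
  set N : ℝ := (n:ℝ) - 1 with hNdef
  rcases eq_or_ne G.diam 1 with hDeq | hDne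
  · -- diameter one: complete graph
    have htop : G = ⊤ := SimpleGraph.diam_eq_one.mp hDeq
    have hc : ∀ i j : Fin n, i ≠ j → G.Adj i j := by
      intro i j hij
      rw [htop]
      exact hij
    have hA : (n:ℝ) ≤ algebraicConnectivity G := by
      unfold algebraicConnectivity
      apply le_csInf
      · obtain ⟨r, x, h1, h2, h3⟩ := hSne
        exact ⟨r, x, h1, h2, h3⟩
      · rintro r ⟨x, hx0, hxs, rfl⟩
        have hxxpos := dot_self_pos x hx0
        rw [le_div_iff₀ hxxpos]
        exact lap_quadform_complete G hc x hxs
    have hDcast : (G.diam : ℝ) = 1 := by rw [hDeq]; norm_num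
    rw [ge_iff_le, hDcast]
    have h8 : 8 * Real.sqrt N / ((n:ℝ) * 1^2) ≤ Real.sqrt N * (n:ℝ) := by
      rw [one_pow, mul_one, div_le_iff₀ hnpos]
      nlinarith [mul_nonneg (Real.sqrt_nonneg N) (by nlinarith : (0:ℝ) ≤ (n:ℝ)*(n:ℝ) - 8)]
    calc 8 * Real.sqrt N / ((n:ℝ) * 1^2) ≤ Real.sqrt N * (n:ℝ) := h8
      _ ≤ randicIndex G * algebraicConnectivity G :=
        mul_le_mul hR hA hnpos.le hR0
  · -- diameter at least two
    have hD2 : (2:ℝ) ≤ (G.diam : ℝ) := by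
      have : 2 ≤ G.diam := by omega
      exact_mod_cast this
    have hA : 4 / ((n:ℝ) * (G.diam : ℝ)) ≤ algebraicConnectivity G := by
      unfold algebraicConnectivity
      apply le_csInf
      · obtain ⟨r, x, h1, h2, h3⟩ := hSne
        exact ⟨r, x, h1, h2, h3⟩
      · rintro r ⟨x, hx0, hxs, rfl⟩
        have hxxpos := dot_self_pos x hx0
        rw [le_div_iff₀ hxxpos]
        exact lap_quadform_ge hn G hG hed x hx0 hxs
    have hA0 : (0:ℝ) ≤ 4 / ((n:ℝ) * (G.diam : ℝ)) := by positivity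
    have step : 8 * Real.sqrt N / ((n:ℝ) * (G.diam : ℝ)^2)
        ≤ Real.sqrt N * (4 / ((n:ℝ) * (G.diam : ℝ))) := by
      have hrw : Real.sqrt N * (4 / ((n:ℝ) * (G.diam : ℝ)))
          = 4 * Real.sqrt N / ((n:ℝ) * (G.diam : ℝ)) := by ring
      rw [hrw, div_le_div_iff₀ (by positivity) (by positivity)]
      nlinarith [Real.sqrt_nonneg N, hD2, hnpos,
        mul_nonneg (mul_nonneg (mul_nonneg (Real.sqrt_nonneg N) hnpos.le)
          (by linarith : (0:ℝ) ≤ (G.diam : ℝ)))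
          (by linarith : (0:ℝ) ≤ 4 * (G.diam : ℝ) - 8)]
    rw [ge_iff_le]
    calc 8 * Real.sqrt N / ((n:ℝ) * (G.diam : ℝ)^2)
        ≤ Real.sqrt N * (4 / ((n:ℝ) * (G.diam : ℝ))) := step
      _ ≤ randicIndex G * algebraicConnectivity G := mul_le_mul hR hA hA0 hR0
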